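/- Let G = (V,E) be a connected undirected graph on {1,...,n} with maximum degree at most d ≥ 3 whose identity labeling is a valid DFS numbering. Let V_d be the set of vertices of degree exactly d in G. Then there exists a connected graph G' = (V,E') with maximum degree at most d-1 such that the identity labeling is a valid DFS numbering of G' and the symmetric difference of edge sets satisfies |E △ E'| ≤ 3·|V_d|. -/

import Mathlib

open Classical

/-- `adj` is (the adjacency relation of) a simple undirected graph on vertex set `{1,…,n}`. -/
def IsGraphOn (n : ℕ) (adj : ℕ → ℕ → Prop) : Prop :=
  Symmetric adj ∧ ∀ u v, adj u v → 1 ≤ u ∧ u ≤ n ∧ 1 ≤ v ∧ v ≤ n ∧ u ≠ v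

/-- `p(v)`: the largest neighbour of `v` that is smaller than `v`, and `0` if none exists
(`sSup ∅ = 0` in `ℕ`). -/
noncomputable def par (adj : ℕ → ℕ → Prop) (v : ℕ) : ℕ :=
  sSup {u | adj u v ∧ u < v}

/-- `(v, {u,w})` is a conflicting pair: `{u,w}` is an edge and `p(v) < u < v < w`. -/
def Conflict (adj : ℕ → ℕ → Prop) (v u w : ℕ) : Prop :=
  adj u w ∧ par adj v < u ∧ u < v ∧ v < w

/-- One step of a (nondeterministic) depth-first search.  The state consists of the list of
already discovered vertices, in order of discovery and together with the recorded (possibly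
virtual) parent from which each was discovered, and of the stack of active vertices
(the white path, top first). -/
inductive DFSStep (n : ℕ) (adj : ℕ → ℕ → Prop) :
    List (ℕ × ℕ) × List ℕ → List (ℕ × ℕ) × List ℕ → Prop
  | root (v : ℕ) (order : List (ℕ × ℕ)) (hv1 : 1 ≤ v) (hv2 : v ≤ n)
      (hnd : v ∉ order.map Prod.fst) :
      DFSStep n adj (order, []) (order ++ [(v, 0)], [v])
  | descend (v t : ℕ) (order : List (ℕ × ℕ)) (stack : List ℕ)
      (hadj : adj t v) (hnd : v ∉ order.map Prod.fst) :
      DFSStep n adj (order, t :: stack) (order ++ [(v, t)], v :: t :: stack)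
  | backtrack (t : ℕ) (order : List (ℕ × ℕ)) (stack : List ℕ)
      (hall : ∀ u, adj t u → u ∈ order.map Prod.fst) :
      DFSStep n adj (order, t :: stack) (order, stack)

/-- A complete DFS run discovering the vertices in the order given by the list `order`. -/
def DFSRun (n : ℕ) (adj : ℕ → ℕ → Prop) (order : List (ℕ × ℕ)) : Prop :=
  Relation.ReflTransGen (DFSStep n adj) ([], []) (order, [])

/-- The labelling `f` is a valid DFS numbering of the graph: some DFS run discovers the
vertices in the order of increasing labels `1, 2, …, n`. -/
def ValidDFSLabel (n : ℕ) (adj : ℕ → ℕ → Prop) (f : ℕ → ℕ) : Prop :=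
  ∃ order, DFSRun n adj order ∧ (order.map Prod.fst).map f = List.range' 1 n

/-- The identity labelling on `{1,…,n}` is a valid DFS numbering of the graph. -/
def ValidDFS (n : ℕ) (adj : ℕ → ℕ → Prop) : Prop :=
  ValidDFSLabel n adj id

/-- The graph is connected (on its vertex set `{1,…,n}`). -/
def ConnOn (n : ℕ) (adj : ℕ → ℕ → Prop) : Prop :=
  ∀ u v, 1 ≤ u → u ≤ n → 1 ≤ v → v ≤ n → Relation.ReflTransGen adj u v

/-- The degree of a vertex. -/
noncomputable def degree (adj : ℕ → ℕ → Prop) (v : ℕ) : ℕ :=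
  Set.ncard {u | adj u v}

/-- The size `|E △ E'|` of the symmetric difference of the edge sets of two graphs
(given by symmetric adjacency relations). -/
noncomputable def edgeDiff (a b : ℕ → ℕ → Prop) : ℕ :=
  Set.ncard {p : ℕ × ℕ | p.1 < p.2 ∧ ¬(a p.1 p.2 ↔ b p.1 p.2)}

/-! ### Chains of a parent function -/

/-- The set of (weak) ancestors of `x` under the parent map `pt` (positive ones). -/
def chain (pt : ℕ → ℕ) (x : ℕ) : Set ℕ := {u : ℕ | 1 ≤ u ∧ ∃ i, pt^[i] x = u}

section ChainLemmas

variable {pt : ℕ → ℕ} (h0 : ∀ y, pt y ≤ y - 1)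

lemma chain_self {x : ℕ} (hx : 1 ≤ x) : x ∈ chain pt x := ⟨hx, 0, rfl⟩

lemma chain_of_pt {u x : ℕ} (hu : u ∈ chain pt (pt x)) : u ∈ chain pt x := by
  obtain ⟨h1, i, hi⟩ := hu
  exact ⟨h1, i + 1, by rw [Function.iterate_succ_apply]; exact hi⟩

lemma pt_mem_chain {x : ℕ} (hx : 1 ≤ pt x) : pt x ∈ chain pt x :=
  chain_of_pt (chain_self hx)

include h0

lemma pt_lt {x : ℕ} (hx : 1 ≤ x) : pt x < x := lt_of_le_of_lt (h0 x) (by omega)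

lemma iterate_le (i x : ℕ) : pt^[i] x ≤ x := by
  induction i with
  | zero => simp
  | succ j ih =>
    rw [Function.iterate_succ_apply']
    exact le_trans (le_trans (h0 _) (by omega)) ih

lemma chain_le {u x : ℕ} (hu : u ∈ chain pt x) : u ≤ x := by
  obtain ⟨_, i, hi⟩ := hu; exact hi ▸ iterate_le h0 i x

omit h0 in
lemma chain_subset {u x : ℕ} (hu : u ∈ chain pt x) : chain pt u ⊆ chain pt x := by
  obtain ⟨_, j, hj⟩ := hu
  rintro w ⟨hw1, i, hi⟩
  exact ⟨hw1, i + j, by rw [Function.iterate_add_apply, hj, hi]⟩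

omit h0 in
lemma chain_cases {u x : ℕ} (hu : u ∈ chain pt x) :
    u = x ∨ u ∈ chain pt (pt x) := by
  obtain ⟨h1, i, hi⟩ := hu
  cases i with
  | zero => exact Or.inl hi.symm
  | succ j => exact Or.inr ⟨h1, j, by rw [Function.iterate_succ_apply] at hi; exact hi⟩

/-- Two elements of a chain are comparable; the smaller is in the chain of the larger. -/
lemma chain_total {u w x : ℕ} (hu : u ∈ chain pt x) (hw : w ∈ chain pt x)
    (huw : u ≤ w) : u ∈ chain pt w := by
  obtain ⟨hu1, i, hi⟩ := hu
  obtain ⟨hw1, j, hj⟩ := hw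
  rcases le_or_gt j i with h | h
  · refine ⟨hu1, i - j, ?_⟩
    have : i = (i - j) + j := by omega
    rw [← hj, ← Function.iterate_add_apply, ← this, hi]
  · -- then w ∈ chain pt u, so w ≤ u, hence u = w
    have hwu : w ∈ chain pt u := by
      refine ⟨hw1, j - i, ?_⟩
      have : j = (j - i) + i := by omega
      rw [← hi, ← Function.iterate_add_apply, ← this, hj]
    have := chain_le h0 hwu
    have : u = w := le_antisymm huw this
    exact this ▸ chain_self hu1
end ChainLemmas

/-! ### The chain as a list (stack), via fuel recursion -/

def chainLF (pt : ℕ → ℕ) : ℕ → ℕ → List ℕ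
  | 0, _ => []
  | f + 1, x => if x = 0 then [] else x :: chainLF pt f (pt x)

def chainL (pt : ℕ → ℕ) (x : ℕ) : List ℕ := chainLF pt x x

section ChainL
variable {pt : ℕ → ℕ} (h0 : ∀ y, pt y ≤ y - 1)
include h0

lemma chainLF_fuel : ∀ f f' x, x ≤ f → x ≤ f' → chainLF pt f x = chainLF pt f' x := by
  intro f
  induction f with
  | zero =>
    intro f' x hx _
    interval_cases x
    cases f' <;> simp [chainLF]
  | succ g ih =>
    intro f' x hx hx'
    cases f' with
    | zero => interval_cases x; simp [chainLF]
    | succ g' =>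
      by_cases hx0 : x = 0
      · simp [chainLF, hx0]
      · have hpt : pt x ≤ x - 1 := h0 x
        simp only [chainLF, hx0, if_false]
        rw [ih g' (pt x) (by omega) (by omega)]

lemma chainL_eq (x : ℕ) (hx : 1 ≤ x) : chainL pt x = x :: chainL pt (pt x) := by
  have hpt : pt x ≤ x - 1 := h0 x
  show chainLF pt x x = x :: chainLF pt (pt x) (pt x)
  cases x with
  | zero => omega
  | succ m =>
    simp only [chainLF, Nat.succ_ne_zero, if_false]
    rw [chainLF_fuel h0 m (pt (m+1)) (pt (m+1)) (by omega) le_rfl]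

end ChainL

lemma chainL_zero (pt : ℕ → ℕ) : chainL pt 0 = [] := rfl

/-! ### Sufficiency: constructing a DFS run from a parent function -/

theorem validDFS_of (n : ℕ) (adj : ℕ → ℕ → Prop) (hG : IsGraphOn n adj) (pt : ℕ → ℕ)
    (h0 : ∀ y, pt y ≤ y - 1)
    (h1 : ∀ x, 2 ≤ x → x ≤ n → 1 ≤ pt x ∧ adj (pt x) x)
    (h2 : ∀ x, 1 ≤ x → x < n → pt (x + 1) ∈ chain pt x)
    (h3 : ∀ x, 1 ≤ x → x < n → ∀ u ∈ chain pt x, pt (x + 1) < u →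
      ∀ w, adj u w → w ≤ x) :
    ValidDFS n adj := by
  set ord : ℕ → List (ℕ × ℕ) := fun k => (List.range' 1 k).map (fun x => (x, pt x)) with hord
  have hmapfst : ∀ k, (ord k).map Prod.fst = List.range' 1 k := by
    intro k
    simp only [hord, List.map_map]
    have : (Prod.fst ∘ fun x => (x, pt x)) = id := rfl
    rw [this, List.map_id]
  have hkey : ∀ k, k ≤ n →
      Relation.ReflTransGen (DFSStep n adj) ([], []) (ord k, chainL pt k) := by
    intro k
    induction k with
    | zero => intro _; exact Relation.ReflTransGen.refl
    | succ k ih =>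
      intro hk1
      have hkn : k ≤ n := by omega
      have hrk := ih hkn
      rcases Nat.eq_zero_or_pos k with hk0 | hkpos
      · -- root step
        subst hk0
        have hstep := DFSStep.root (n := n) (adj := adj) 1 [] le_rfl (by omega) (by simp)
        have h1' : pt 1 = 0 := by have := h0 1; omega
        have : ord 1 = [(1, 0)] := by simp [hord, List.range'_one, h1']
        rw [show chainL pt 1 = [1] by rw [chainL_eq h0 1 le_rfl, h1', chainL_zero pt], this]
        exact Relation.ReflTransGen.single hstep
      · -- pop to pt (k+1), then descend
        set t := pt (k + 1) with ht
        have htmem : t ∈ chain pt k := h2 k hkpos (by omega)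
        have ht1 : 1 ≤ t := (h1 (k + 1) (by omega) hk1).1
        -- popping lemma
        have hpop : ∀ y, y ∈ chain pt k → t ∈ chain pt y →
            Relation.ReflTransGen (DFSStep n adj) (ord k, chainL pt y) (ord k, chainL pt t) := by
          intro y
          induction y using Nat.strong_induction_on with
          | _ y ihy =>
            intro hyk hty
            by_cases hyt : y = t
            · subst hyt; exact Relation.ReflTransGen.refl
            · have hy1 : 1 ≤ y := le_trans ht1 (chain_le h0 hty)
              have hty' : t ∈ chain pt (pt y) := by
                rcases chain_cases hty with h | h
                · exact absurd h.symm hyt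
                · exact h
              have htly : t < y := by
                have := chain_le h0 hty'
                have := pt_lt h0 hy1
                omega
              have hall : ∀ u, adj y u → u ∈ (ord k).map Prod.fst := by
                intro u hu
                have hu1 : 1 ≤ u := (hG.2 y u hu).2.2.1
                have := h3 k hkpos (by omega) y hyk htly u hu
                rw [hmapfst k, List.mem_range'_1]
                omega
              have hstep : DFSStep n adj (ord k, y :: chainL pt (pt y)) (ord k, chainL pt (pt y)) :=
                DFSStep.backtrack y (ord k) (chainL pt (pt y)) hall
              rw [chainL_eq h0 y hy1]
              refine Relation.ReflTransGen.head hstep ?_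
              have hptyk : pt y ∈ chain pt k :=
                chain_subset (pt := pt) hyk (pt_mem_chain (le_trans ht1 (chain_le h0 hty')))
              exact ihy (pt y) (pt_lt h0 hy1) hptyk hty'
        have hrun1 := Relation.ReflTransGen.trans hrk (hpop k (chain_self hkpos) htmem)
        -- descend step
        have hnd : (k + 1) ∉ (ord k).map Prod.fst := by
          rw [hmapfst k, List.mem_range'_1]; omega
        have hadj : adj t (k + 1) := (h1 (k + 1) (by omega) hk1).2
        have hstep := DFSStep.descend (n := n) (adj := adj) (k + 1) t (ord k)
          (chainL pt (pt t)) hadj hnd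
        rw [chainL_eq h0 t ht1] at hrun1
        refine Relation.ReflTransGen.trans (Relation.ReflTransGen.tail hrun1 hstep) ?_
        have hords : ord (k + 1) = ord k ++ [(k + 1, t)] := by
          simp only [hord]
          rw [show List.range' 1 (k+1) = List.range' 1 k ++ [1 + 1 * k] from List.range'_concat (s := 1) (n := k),
            List.map_append]
          have h11 : 1 + 1 * k = k + 1 := by omega
          rw [h11]
          simp [ht]
        have hstk : chainL pt (k + 1) = (k + 1) :: t :: chainL pt (pt t) := by
          rw [chainL_eq h0 (k + 1) (by omega), ← ht, chainL_eq h0 t ht1]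
        rw [hords, hstk]
  -- final popping
  have hfin : ∀ y, Relation.ReflTransGen (DFSStep n adj) (ord n, chainL pt y) (ord n, []) := by
    intro y
    induction y using Nat.strong_induction_on with
    | _ y ihy =>
      rcases Nat.eq_zero_or_pos y with h | h
      · subst h; exact Relation.ReflTransGen.refl
      · rw [chainL_eq h0 y h]
        have hall : ∀ u, adj y u → u ∈ (ord n).map Prod.fst := by
          intro u hu
          have := hG.2 y u hu
          rw [hmapfst n, List.mem_range'_1]
          omega
        exact Relation.ReflTransGen.head
          (DFSStep.backtrack y (ord n) (chainL pt (pt y)) hall)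
          (ihy (pt y) (pt_lt h0 h))
  refine ⟨ord n, Relation.ReflTransGen.trans (hkey n le_rfl) (hfin n), ?_⟩
  rw [List.map_id, hmapfst n]

/-! ### Necessity: extracting a parent function from a DFS run -/

lemma key_unique : ∀ (l : List (ℕ × ℕ)), (l.map Prod.fst).Nodup →
    ∀ {x a b : ℕ}, (x, a) ∈ l → (x, b) ∈ l → a = b := by
  intro l
  induction l with
  | nil => intro _ x a b ha; simp at ha
  | cons p l ih =>
    intro hnd x a b ha hb
    simp only [List.map_cons, List.nodup_cons] at hnd
    rcases List.mem_cons.1 ha with ha' | ha' <;> rcases List.mem_cons.1 hb with hb' | hb'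
    · exact (Prod.ext_iff.1 (ha'.trans hb'.symm)).2
    · exfalso
      apply hnd.1
      have hx : p.1 = x := by rw [← ha']
      rw [hx]
      simpa using List.mem_map_of_mem (f := Prod.fst) hb'
    · exfalso
      apply hnd.1
      have hx : p.1 = x := by rw [← hb']
      rw [hx]
      simpa using List.mem_map_of_mem (f := Prod.fst) ha'
    · exact ih hnd.2 ha' hb'

lemma prefix_range' : ∀ (l : List ℕ) (s m : ℕ), l <+: List.range' s m →
    l = List.range' s l.length := by
  intro l
  induction l with
  | nil => intro s m _; rfl
  | cons a l ih =>
    intro s m hp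
    cases m with
    | zero => exact absurd hp.subset (by simp)
    | succ m' =>
      rw [List.range'_succ] at hp
      rw [List.cons_prefix_cons] at hp
      obtain ⟨ha, hp'⟩ := hp
      subst ha
      rw [List.length_cons, List.range'_succ]
      exact congrArg (List.cons a) (ih (a + 1) m' hp')

/-- Pt-linked stacks are bounded by their head. -/
lemma stack_le {pt : ℕ → ℕ} (h0 : ∀ y, pt y ≤ y - 1) :
    ∀ (l : List ℕ) (b : ℕ), List.Chain' (fun a c => pt a = c) (b :: l) →
      ∀ a ∈ b :: l, a ≤ b := by
  intro l
  induction l with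
  | nil => intro b _ a ha; simp at ha; omega
  | cons c l ih =>
    intro b hch a ha
    replace hch := List.isChain_cons_cons.1 hch
    rcases List.mem_cons.1 ha with rfl | ha'
    · exact le_rfl
    · have := ih c hch.2 a ha'
      have := h0 b
      omega

theorem exists_pt (n : ℕ) (adj : ℕ → ℕ → Prop) (hG : IsGraphOn n adj) (hconn : ConnOn n adj)
    (order : List (ℕ × ℕ)) (hrun : DFSRun n adj order)
    (horder : order.map Prod.fst = List.range' 1 n) :
    ∃ pt : ℕ → ℕ, (∀ y, pt y ≤ y - 1) ∧
      (∀ x, 2 ≤ x → x ≤ n → 1 ≤ pt x ∧ adj (pt x) x) ∧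
      (∀ x, 1 ≤ x → x < n → pt (x + 1) ∈ chain pt x) ∧
      (∀ x, 1 ≤ x → x < n → ∀ u ∈ chain pt x, pt (x + 1) < u → ∀ w, adj u w → w ≤ x) := by
  classical
  set pt : ℕ → ℕ := fun x => if h : ∃ t, (x, t) ∈ order then min h.choose (x - 1) else 0
    with hptdef
  have h0 : ∀ y, pt y ≤ y - 1 := by
    intro y
    simp only [hptdef]
    split
    · exact min_le_right _ _
    · omega
  have hnodup : (order.map Prod.fst).Nodup := by rw [horder]; exact List.nodup_range' (s := 1) (n := n)
  have hpt_eq : ∀ {x t : ℕ}, (x, t) ∈ order → pt x = min t (x - 1) := by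
    intro x t hm
    have hex : ∃ t', (x, t') ∈ order := ⟨t, hm⟩
    have hspec := hex.choose_spec
    have := key_unique order hnodup hspec hm
    simp only [hptdef, dif_pos hex, this]
  -- prefix facts
  have step_pref : ∀ {s s' : List (ℕ × ℕ) × List ℕ}, DFSStep n adj s s' → s.1 <+: s'.1 := by
    intro s s' h
    cases h with
    | root v o _ _ _ => exact List.prefix_append _ _
    | descend v t o st _ _ => exact List.prefix_append _ _
    | backtrack t o st _ => exact List.prefix_rfl
  have hpfx_fst : ∀ {o : List (ℕ × ℕ)}, o <+: order →
      o.map Prod.fst = List.range' 1 o.length := by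
    intro o hp
    have := List.IsPrefix.map Prod.fst hp
    rw [horder] at this
    have h2 := prefix_range' (o.map Prod.fst) 1 n this
    rwa [List.length_map] at h2
  -- the big invariant
  have main : ∀ s : List (ℕ × ℕ) × List ℕ,
      Relation.ReflTransGen (DFSStep n adj) ([], []) s → s.1 <+: order →
      ((∀ p ∈ s.1, 2 ≤ p.1 → adj p.2 p.1 ∧ 1 ≤ p.2 ∧ p.2 < p.1) ∧
       List.Chain' (fun a c => pt a = c) s.2 ∧
       (∀ a ∈ s.2, a ∈ s.1.map Prod.fst) ∧
       (∀ h hs, s.2 = h :: hs → h ∈ chain pt s.1.length) ∧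
       (∀ u ∈ s.1.map Prod.fst, u ∉ s.2 → ∀ w, adj u w → w ∈ s.1.map Prod.fst) ∧
       (∀ x, 1 ≤ x → x < s.1.length → pt (x + 1) ∈ chain pt x ∧
         (∀ u ∈ chain pt x, pt (x + 1) < u → ∀ w, adj u w → w ≤ x))) := by
    intro s hreach
    induction hreach with
    | refl =>
      intro _
      refine ⟨by simp, List.IsChain.nil, by simp, by simp, by simp, ?_⟩
      intro x _ hx
      simp at hx
    | @tail b c hr hstep ih =>
      intro hpfx
      have hpfxb : b.1 <+: order := (step_pref hstep).trans hpfx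
      obtain ⟨J1, JC, JS, JH, J3, J5⟩ := ih hpfxb
      have hofst : b.1.map Prod.fst = List.range' 1 b.1.length := hpfx_fst hpfxb
      cases hstep with
      | root v o hv1 hv2 hnd =>
        simp only at J1 JC JS JH J3 J5 hofst ⊢
        -- v = o.length + 1
        have hfst' : (o ++ [(v, 0)]).map Prod.fst = List.range' 1 (o.length + 1) := by
          have := hpfx_fst hpfx
          simpa using this
        have hv : v = o.length + 1 := by
          have h1 : (o ++ [(v, 0)]).map Prod.fst = o.map Prod.fst ++ [v] := by simp
          rw [h1, hofst, List.range'_concat] at hfst'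
          have := List.append_cancel_left hfst'
          simp at this
          omega
        rcases Nat.eq_zero_or_pos o.length with hk0 | hkpos
        · -- first root
          have ho : o = [] := List.length_eq_zero_iff.1 hk0
          subst ho
          have hv1' : v = 1 := by simpa using hv
          subst hv1'
          refine ⟨?_, List.IsChain.singleton _, by simp, ?_, ?_, ?_⟩
          · rintro p hp h2p
            simp at hp
            subst hp
            simp at h2p
          · intro h hs hh
            injection hh with h1 h2
            exact h1 ▸ chain_self (pt := pt) le_rfl
          · intro u hu hnu
            simp at hu
            subst hu
            simp at hnu
          · intro x hx1 hx2
            simp at hx2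
            omega
        · -- second root: impossible
          exfalso
          have hcl : ∀ u ∈ o.map Prod.fst, ∀ w, adj u w → w ∈ o.map Prod.fst := by
            intro u hu w hw
            exact J3 u hu (by simp) w hw
          have h1mem : (1 : ℕ) ∈ o.map Prod.fst := by
            rw [hofst, List.mem_range'_1]; omega
          have hreachadj : Relation.ReflTransGen adj 1 v := hconn 1 v le_rfl (by omega) hv1 hv2
          have hclosure : ∀ z, Relation.ReflTransGen adj 1 z → z ∈ o.map Prod.fst := by
            intro z hz
            induction hz with
            | refl => exact h1mem
            | tail _ ha ih' => exact hcl _ ih' _ ha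
          have hvmem : v ∈ o.map Prod.fst := hclosure v hreachadj
          rw [hofst, List.mem_range'_1] at hvmem
          omega
      | descend v t o stack hadj hnd =>
        simp only at J1 JC JS JH J3 J5 hofst ⊢
        set k := o.length with hk
        have hfst' : (o ++ [(v, t)]).map Prod.fst = List.range' 1 (k + 1) := by
          have := hpfx_fst hpfx
          simpa using this
        have hv : v = k + 1 := by
          have h1 : (o ++ [(v, t)]).map Prod.fst = o.map Prod.fst ++ [v] := by simp
          rw [h1, hofst, List.range'_concat] at hfst'
          have := List.append_cancel_left hfst'
          simp at this
          omega
        have htop : t ∈ chain pt k := JH t stack rfl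
        have htmem : t ∈ o.map Prod.fst := JS t (by simp)
        have htb : 1 ≤ t ∧ t < 1 + k := by rwa [hofst, List.mem_range'_1] at htmem
        have hvtmem : (v, t) ∈ order := hpfx.subset (by simp)
        have hptv : pt v = t := by
          rw [hpt_eq hvtmem]
          omega
        have hnewfst : (o ++ [(v, t)]).map Prod.fst = o.map Prod.fst ++ [v] := by simp
        refine ⟨?_, ?_, ?_, ?_, ?_, ?_⟩
        · intro p hp h2p
          rcases List.mem_append.1 hp with hp' | hp'
          · exact J1 p hp' h2p
          · simp at hp'
            subst hp'
            exact ⟨hadj, by omega, by omega⟩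
        · exact List.isChain_cons_cons.2 ⟨hptv, JC⟩
        · intro a ha
          rw [hnewfst, List.mem_append]
          rcases List.mem_cons.1 ha with rfl | ha'
          · right; simp
          · left; exact JS a ha'
        · intro h hs hh
          injection hh with h1 h2
          subst h1
          have hlen2 : (o ++ [(v, t)]).length = v := by
            simp only [List.length_append, List.length_cons, List.length_nil]
            omega
          rw [hlen2]
          exact chain_self (pt := pt) (by omega)
        · intro u hu hnu w hw
          rw [hnewfst, List.mem_append] at hu ⊢
          rcases hu with hu' | hu'
          · have : u ∉ t :: stack := fun hc => hnu (List.mem_cons_of_mem v hc)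
            left
            exact J3 u hu' this w hw
          · exfalso
            simp at hu'
            subst hu'
            exact hnu (by simp)
        · intro x hx1 hx2
          simp only [List.length_append, List.length_cons, List.length_nil] at hx2
          rcases Nat.lt_or_ge x k with hxk | hxk
          · exact J5 x hx1 hxk
          · have hxeq : x = k := by omega
            constructor
            · have hxv : x + 1 = v := by omega
              rw [hxv, hptv, hxeq]
              exact htop
            · intro u hu htu w hw
              rw [show x + 1 = v by omega, hptv] at htu
              rw [hxeq] at hu
              have hule : u ≤ k := chain_le h0 hu
              have humem : u ∈ o.map Prod.fst := by
                rw [hofst, List.mem_range'_1]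
                exact ⟨hu.1, by omega⟩
              have hunst : u ∉ t :: stack := by
                intro hc
                have := stack_le h0 stack t JC u hc
                omega
              have := J3 u humem hunst w hw
              rw [hofst, List.mem_range'_1] at this
              omega
      | backtrack t o stack hall =>
        simp only at J1 JC JS JH J3 J5 hofst ⊢
        refine ⟨J1, JC.tail, fun a ha => JS a (List.mem_cons_of_mem t ha), ?_, ?_, J5⟩
        · intro h hs hh
          subst hh
          replace JC := List.isChain_cons_cons.1 JC
          have htop : t ∈ chain pt o.length := JH t (h :: hs) rfl
          have hh1 : 1 ≤ h := by
            have := JS h (by simp)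
            rw [hofst, List.mem_range'_1] at this
            omega
          rw [← JC.1]
          exact chain_subset htop (pt_mem_chain (by rwa [JC.1]))
        · intro u hu hnu w hw
          by_cases hut : u = t
          · subst hut; exact hall w hw
          · exact J3 u hu (by simp [hut, hnu]) w hw
  -- conclude
  have hlen : order.length = n := by
    have := congrArg List.length horder
    simpa using this
  obtain ⟨J1, _, _, _, _, J5⟩ := main (order, []) hrun List.prefix_rfl
  refine ⟨pt, h0, ?_, ?_, ?_⟩
  · intro x h2x hxn
    have hxmem : x ∈ order.map Prod.fst := by
      rw [horder, List.mem_range'_1]; omega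
    obtain ⟨p, hp, hfst⟩ := List.mem_map.1 hxmem
    have hpx : p = (x, p.2) := by
      rw [← hfst]
    rw [hpx] at hp
    obtain ⟨ha, h1, hlt⟩ := J1 (x, p.2) hp (by simpa using h2x)
    have : pt x = p.2 := by rw [hpt_eq hp]; omega
    rw [this]
    exact ⟨h1, ha⟩
  · intro x hx1 hx2
    exact (J5 x hx1 (show x < order.length by omega)).1
  · intro x hx1 hx2
    exact (J5 x hx1 (show x < order.length by omega)).2

/-! ### Counting helpers -/

lemma ncard_bound {s r a t : Set ℕ} (hs : s.Finite) (ha : a.Finite) (hr : r ⊆ s)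
    (ht : t ⊆ (s \ r) ∪ a) : t.ncard ≤ s.ncard - r.ncard + a.ncard := by
  have h1 : t.ncard ≤ ((s \ r) ∪ a).ncard :=
    Set.ncard_le_ncard ht (hs.diff.union ha)
  have h2 : ((s \ r) ∪ a).ncard ≤ (s \ r).ncard + a.ncard := Set.ncard_union_le _ _
  have h3 : (s \ r).ncard = s.ncard - r.ncard := Set.ncard_diff hr (hs.subset hr)
  omega

lemma union3 (F : Set ℕ) (hF : F.Finite) (B : ℕ → Set (ℕ × ℕ))
    (hBfin : ∀ v, (B v).Finite) (hBcard : ∀ v, (B v).ncard ≤ 3) :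
    (⋃ v ∈ F, B v).Finite ∧ (⋃ v ∈ F, B v).ncard ≤ 3 * F.ncard := by
  refine Set.Finite.induction_on F hF ?_ ?_
  · simp
  · intro a s ha hsf ih
    rw [Set.biUnion_insert]
    constructor
    · exact (hBfin a).union ih.1
    · have h1 : (B a ∪ ⋃ v ∈ s, B v).ncard ≤ (B a).ncard + (⋃ v ∈ s, B v).ncard :=
        Set.ncard_union_le _ _
      have h2 : (insert a s).ncard = s.ncard + 1 := Set.ncard_insert_of_notMem ha hsf
      have h3 := hBcard a
      have h4 := ih.2
      omega

/-! ### The construction -/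

section Cons

variable (n d : ℕ) (adj : ℕ → ℕ → Prop) (pt : ℕ → ℕ)

/-- Non-tree neighbours of `x`. -/
def NTs : ℕ → Set ℕ := fun x => {u | adj u x ∧ u ≠ pt x ∧ pt u ≠ x}

/-- Children neighbours of `v`. -/
def childs : ℕ → Set ℕ := fun v => {w | adj v w ∧ pt w = v}

/-- Vertices of degree exactly `d`. -/
def Vds : Set ℕ := {v | 1 ≤ v ∧ v ≤ n ∧ degree adj v = d}

/-- Surgery vertices: degree-`d` vertices all of whose edges are tree edges. -/
def Ss : Set ℕ := {v | v ∈ Vds n d adj ∧ NTs adj pt v = ∅}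

noncomputable def c1s : ℕ → ℕ := fun v => sInf (childs adj pt v)
noncomputable def ccs : ℕ → ℕ := fun v => sInf (childs adj pt v \ {c1s adj pt v})
noncomputable def tts : ℕ → ℕ := fun v => ccs adj pt v - 1
noncomputable def e1s : ℕ → ℕ := fun x => sSup (NTs adj pt x)
noncomputable def e2s : ℕ → ℕ := fun x => sSup (NTs adj pt x \ {e1s adj pt x})

def R1s (u w : ℕ) : Prop := u ∈ Ss n d adj pt ∧ w = ccs adj pt u
def R2s (u w : ℕ) : Prop :=
  w ∈ Vds n d adj ∧ (NTs adj pt w).Nonempty ∧ (u = e1s adj pt w ∨ u = e2s adj pt w)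
def R3s (u w : ℕ) : Prop :=
  (∃ v ∈ Ss n d adj pt, w = tts adj pt v) ∧ (NTs adj pt w).Nonempty ∧ u = e1s adj pt w
def Rems (u w : ℕ) : Prop :=
  R1s n d adj pt u w ∨ R1s n d adj pt w u ∨ R2s n d adj pt u w ∨ R2s n d adj pt w u ∨
    R3s n d adj pt u w ∨ R3s n d adj pt w u
def Adds (u w : ℕ) : Prop :=
  ∃ v ∈ Ss n d adj pt, (u = tts adj pt v ∧ w = ccs adj pt v) ∨
    (w = tts adj pt v ∧ u = ccs adj pt v)
def adjs (u w : ℕ) : Prop :=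
  (adj u w ∧ ¬ Rems n d adj pt u w) ∨ Adds n d adj pt u w

end Cons

theorem reduce (n d : ℕ) (adj : ℕ → ℕ → Prop) (pt : ℕ → ℕ)
    (hG : IsGraphOn n adj) (hd : 3 ≤ d) (hdeg : ∀ v, degree adj v ≤ d)
    (h0 : ∀ y, pt y ≤ y - 1)
    (h1 : ∀ x, 2 ≤ x → x ≤ n → 1 ≤ pt x ∧ adj (pt x) x)
    (h2 : ∀ x, 1 ≤ x → x < n → pt (x + 1) ∈ chain pt x)
    (h3 : ∀ x, 1 ≤ x → x < n → ∀ u ∈ chain pt x, pt (x + 1) < u → ∀ w, adj u w → w ≤ x) :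
    IsGraphOn n (adjs n d adj pt) ∧ ConnOn n (adjs n d adj pt) ∧
    (∀ v, degree (adjs n d adj pt) v ≤ d - 1) ∧ ValidDFS n (adjs n d adj pt) ∧
    edgeDiff adj (adjs n d adj pt) ≤ 3 * Set.ncard {v | 1 ≤ v ∧ v ≤ n ∧ degree adj v = d} := by
  classical
  have hsym : Symmetric adj := hG.1
  have hb := hG.2
  -- finiteness of neighbourhoods
  have hNfin : ∀ x, {u | adj u x}.Finite := by
    intro x
    apply (Set.finite_Icc 1 n).subset
    intro u hu
    exact Set.mem_Icc.2 ⟨(hb u x hu).1, (hb u x hu).2.1⟩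
  have hNTsub : ∀ x, NTs adj pt x ⊆ {u | adj u x} := fun x u hu => hu.1
  have hNTfin : ∀ x, (NTs adj pt x).Finite := fun x => (hNfin x).subset (hNTsub x)
  have hchildsub : ∀ v, childs adj pt v ⊆ {u | adj u v} := fun v w hw => hsym hw.1
  have hchildfin : ∀ v, (childs adj pt v).Finite := fun v => (hNfin v).subset (hchildsub v)
  have hptlt : ∀ y, 1 ≤ y → pt y < y := fun y hy => by have := h0 y; omega
  -- two children for surgery vertices
  have hchild_two : ∀ v ∈ Ss n d adj pt, 1 < (childs adj pt v).ncard := by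
    intro v hv
    have hdv : degree adj v = d := hv.1.2.2
    have hsub : {u | adj u v} \ {pt v} ⊆ childs adj pt v := by
      rintro u ⟨hu, hne⟩
      have hnNT : u ∉ NTs adj pt v := by rw [hv.2]; exact Set.notMem_empty u
      by_cases hpu : pt u = v
      · exact ⟨hsym hu, hpu⟩
      · exact absurd ⟨hu, by simpa using hne, hpu⟩ hnNT
    have hle : ({u | adj u v}).ncard ≤ ({u | adj u v} \ {pt v}).ncard + 1 := by
      have hcover : {u | adj u v} ⊆ ({u | adj u v} \ {pt v}) ∪ {pt v} := by
        intro u hu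
        by_cases h : u = pt v
        · right; simp [h]
        · left; exact ⟨hu, by simp [h]⟩
      calc ({u | adj u v}).ncard
          ≤ (({u | adj u v} \ {pt v}) ∪ {pt v}).ncard :=
            Set.ncard_le_ncard hcover ((hNfin v).diff.union (Set.finite_singleton _))
        _ ≤ ({u | adj u v} \ {pt v}).ncard + ({pt v} : Set ℕ).ncard := Set.ncard_union_le _ _
        _ = ({u | adj u v} \ {pt v}).ncard + 1 := by rw [Set.ncard_singleton]
    have hch : ({u | adj u v} \ {pt v}).ncard ≤ (childs adj pt v).ncard :=
      Set.ncard_le_ncard hsub (hchildfin v)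
    have : degree adj v = ({u | adj u v}).ncard := rfl
    omega
  have hchild_ne : ∀ v ∈ Ss n d adj pt, (childs adj pt v).Nonempty := by
    intro v hv
    rcases Set.eq_empty_or_nonempty (childs adj pt v) with h | h
    · exfalso; have := hchild_two v hv; rw [h] at this; simp at this
    · exact h
  have hc1mem : ∀ v ∈ Ss n d adj pt, c1s adj pt v ∈ childs adj pt v := by
    intro v hv
    exact Nat.sInf_mem (hchild_ne v hv)
  have hccmem : ∀ v ∈ Ss n d adj pt,
      ccs adj pt v ∈ childs adj pt v ∧ ccs adj pt v ≠ c1s adj pt v := by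
    intro v hv
    have hne : (childs adj pt v \ {c1s adj pt v}).Nonempty := by
      rcases Set.eq_empty_or_nonempty (childs adj pt v \ {c1s adj pt v}) with h | h
      · exfalso
        have hsub2 : childs adj pt v ⊆ {c1s adj pt v} := Set.diff_eq_empty.1 h
        have := Set.ncard_le_ncard hsub2 (Set.finite_singleton _)
        rw [Set.ncard_singleton] at this
        have := hchild_two v hv
        omega
      · exact h
    have := Nat.sInf_mem hne
    exact ⟨this.1, fun h => this.2 h⟩
  -- basic facts about surgery vertices
  have hSfacts : ∀ v ∈ Ss n d adj pt,
      pt (ccs adj pt v) = v ∧ adj v (ccs adj pt v) ∧ v < c1s adj pt v ∧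
      c1s adj pt v < ccs adj pt v ∧ ccs adj pt v ≤ n ∧ 1 ≤ v := by
    intro v hv
    have hc1 := hc1mem v hv
    have hcc := hccmem v hv
    have hv1 : 1 ≤ v := hv.1.1
    have hc1b := hb v (c1s adj pt v) hc1.1
    have hccb := hb v (ccs adj pt v) hcc.1.1
    have hvc1 : v < c1s adj pt v := by
      have := hc1.2
      have := hptlt (c1s adj pt v) hc1b.2.2.1
      omega
    have hle : c1s adj pt v ≤ ccs adj pt v := Nat.sInf_le hcc.1
    exact ⟨hcc.1.2, hcc.1.1, hvc1, by omega, hccb.2.2.2.1, hv1⟩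
  have htt_facts : ∀ v ∈ Ss n d adj pt,
      v < tts adj pt v ∧ 1 ≤ tts adj pt v ∧ tts adj pt v < ccs adj pt v ∧
      tts adj pt v < n ∧ 2 ≤ ccs adj pt v := by
    intro v hv
    obtain ⟨hpt, hadj, hvc1, hc1cc, hccn, hv1⟩ := hSfacts v hv
    have hc1b := hb v (c1s adj pt v) (hc1mem v hv).1
    have : tts adj pt v = ccs adj pt v - 1 := rfl
    constructor
    · omega
    constructor
    · omega
    constructor
    · omega
    constructor
    · omega
    · omega
  -- the target is "finished": all its neighbours are smaller
  have hTfin : ∀ v ∈ Ss n d adj pt, ∀ w, adj (tts adj pt v) w → w < tts adj pt v := by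
    intro v hv w hw
    obtain ⟨hvt, ht1, htcc, htn, hcc2⟩ := htt_facts v hv
    obtain ⟨hpt, hadjv, _, _, hccn, hv1⟩ := hSfacts v hv
    set x := tts adj pt v with hx
    have hx1 : x + 1 = ccs adj pt v := by
      simp only [hx, tts]; omega
    have hptx : pt (x + 1) = v := by rw [hx1]; exact hpt
    have hle := h3 x ht1 htn x (chain_self ht1) (by omega) w hw
    have hne := (hb (tts adj pt v) w hw).2.2.2.2
    omega
  -- eliminating `Px`
  have hPxElim : ∀ x, (∃ v ∈ Ss n d adj pt, x = ccs adj pt v) →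
      pt x ∈ Ss n d adj pt ∧ x = ccs adj pt (pt x) ∧ adj (pt x) x ∧ 2 ≤ x ∧ x ≤ n := by
    rintro x ⟨v, hv, rfl⟩
    obtain ⟨hpt, hadj, hvc1, hc1cc, hccn, hv1⟩ := hSfacts v hv
    rw [hpt]
    exact ⟨hv, rfl, hadj, by omega, hccn⟩
  -- e1/e2 membership
  have he1mem : ∀ x, (NTs adj pt x).Nonempty → e1s adj pt x ∈ NTs adj pt x := by
    intro x hne
    apply Nat.sSup_mem hne
    exact ⟨n, fun u hu => (hb u x hu.1).2.1⟩
  have he2mem : ∀ x, (NTs adj pt x \ {e1s adj pt x}).Nonempty →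
      e2s adj pt x ∈ NTs adj pt x ∧ e2s adj pt x ≠ e1s adj pt x := by
    intro x hne
    have := Nat.sSup_mem hne ⟨n, fun u hu => (hb u x hu.1.1).2.1⟩
    exact ⟨this.1, fun h => this.2 h⟩
  have hxnotNTpt : ∀ x, x ∉ NTs adj pt (pt x) := by
    intro x hmem
    exact hmem.2.2 rfl
  -- parent edges survive, unless the vertex is a removed child
  have hParentOK : ∀ x, 2 ≤ x → x ≤ n → ¬(∃ v ∈ Ss n d adj pt, x = ccs adj pt v) →
      ¬ Rems n d adj pt (pt x) x := by
    intro x hx2 hxn hnPx hR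
    have hpx1 : 1 ≤ pt x := (h1 x hx2 hxn).1
    rcases hR with h | h | h | h | h | h
    · exact hnPx ⟨pt x, h.1, h.2⟩
    · obtain ⟨hxS, heq⟩ := h
      obtain ⟨_, _, hvc1, hc1cc, _, _⟩ := hSfacts x hxS
      have := hptlt x (by omega)
      have hcx := (hSfacts x hxS).2.1
      have := (htt_facts x hxS).1
      simp only [tts] at this
      omega
    · obtain ⟨_, hne, heq⟩ := h
      rcases heq with heq | heq
      · exact (he1mem x hne).2.1 heq.symm
      · by_cases hne2 : (NTs adj pt x \ {e1s adj pt x}).Nonempty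
        · exact ((he2mem x hne2).1).2.1 heq.symm
        · have : NTs adj pt x \ {e1s adj pt x} = ∅ :=
            Set.not_nonempty_iff_eq_empty.1 hne2
          have he20 : e2s adj pt x = 0 := by
            simp only [e2s, this]
            exact csSup_empty
          omega
    · obtain ⟨_, hne, heq⟩ := h
      rcases heq with heq | heq
      · have hmem := he1mem (pt x) hne
        rw [← heq] at hmem
        exact hxnotNTpt x hmem
      · by_cases hne2 : (NTs adj pt (pt x) \ {e1s adj pt (pt x)}).Nonempty
        · have hmem := (he2mem (pt x) hne2).1
          rw [← heq] at hmem
          exact hxnotNTpt x hmem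
        · have : NTs adj pt (pt x) \ {e1s adj pt (pt x)} = ∅ :=
            Set.not_nonempty_iff_eq_empty.1 hne2
          have he20 : e2s adj pt (pt x) = 0 := by
            simp only [e2s, this]
            exact csSup_empty
          omega
    · obtain ⟨_, hne, heq⟩ := h
      exact (he1mem x hne).2.1 heq.symm
    · obtain ⟨_, hne, heq⟩ := h
      have hmem := he1mem (pt x) hne
      rw [← heq] at hmem
      exact hxnotNTpt x hmem
  -- bounds for added edges
  have hAdbounds : ∀ u w, Adds n d adj pt u w →
      1 ≤ u ∧ u ≤ n ∧ 1 ≤ w ∧ w ≤ n ∧ u ≠ w := by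
    rintro u w ⟨v, hv, h | h⟩ <;>
    · obtain ⟨hu, hw⟩ := h
      obtain ⟨hvt, ht1, htcc, htn, hcc2⟩ := htt_facts v hv
      obtain ⟨_, _, _, _, hccn, _⟩ := hSfacts v hv
      subst hu; subst hw
      refine ⟨by omega, by omega, by omega, by omega, by omega⟩
  have hAdsym : ∀ u w, Adds n d adj pt u w → Adds n d adj pt w u := by
    rintro u w ⟨v, hv, h | h⟩
    · exact ⟨v, hv, Or.inr h⟩
    · exact ⟨v, hv, Or.inl h⟩
  have hRemsym : ∀ u w, Rems n d adj pt u w → Rems n d adj pt w u := by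
    intro u w h
    rcases h with h | h | h | h | h | h
    · exact Or.inr (Or.inl h)
    · exact Or.inl h
    · exact Or.inr (Or.inr (Or.inr (Or.inl h)))
    · exact Or.inr (Or.inr (Or.inl h))
    · exact Or.inr (Or.inr (Or.inr (Or.inr (Or.inr h))))
    · exact Or.inr (Or.inr (Or.inr (Or.inr (Or.inl h))))
  -- the new graph is a graph
  have hG2 : IsGraphOn n (adjs n d adj pt) := by
    constructor
    · intro u w h
      rcases h with ⟨ha, hr⟩ | ha
      · exact Or.inl ⟨hsym ha, fun hc => hr (hRemsym w u hc)⟩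
      · exact Or.inr (hAdsym u w ha)
    · intro u w h
      rcases h with ⟨ha, _⟩ | ha
      · exact hb u w ha
      · exact hAdbounds u w ha
  -- structure of added edges at a fixed endpoint
  have hAd_struct : ∀ u x, Adds n d adj pt u x →
      ((∃ v ∈ Ss n d adj pt, x = ccs adj pt v) ∧ u = tts adj pt (pt x)) ∨
      ((∃ v ∈ Ss n d adj pt, x = tts adj pt v) ∧ u = x + 1) := by
    rintro u x ⟨v, hv, h | h⟩
    · obtain ⟨hu, hx⟩ := h
      left
      refine ⟨⟨v, hv, hx⟩, ?_⟩
      have := (hSfacts v hv).1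
      rw [hx, this, hu]
    · obtain ⟨hx, hu⟩ := h
      right
      refine ⟨⟨v, hv, hx⟩, ?_⟩
      have := (htt_facts v hv).2.2.2.2
      simp only [tts] at hx
      omega
  -- connectivity
  have hdown : ∀ x, 2 ≤ x → x ≤ n →
      ∃ y, 1 ≤ y ∧ y < x ∧ y ≤ n ∧ adjs n d adj pt y x := by
    intro x hx2 hxn
    by_cases hPx : ∃ v ∈ Ss n d adj pt, x = ccs adj pt v
    · obtain ⟨hS, hxcc, hadj, _, _⟩ := hPxElim x hPx
      refine ⟨tts adj pt (pt x), ?_, ?_, ?_, ?_⟩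
      · exact (htt_facts (pt x) hS).2.1
      · have := (htt_facts (pt x) hS).2.2.1
        omega
      · have := (htt_facts (pt x) hS).2.2.2.1
        omega
      · exact Or.inr ⟨pt x, hS, Or.inl ⟨rfl, hxcc⟩⟩
    · obtain ⟨hp1, hpa⟩ := h1 x hx2 hxn
      exact ⟨pt x, hp1, hptlt x (by omega), by have := hptlt x (by omega); omega,
        Or.inl ⟨hpa, hParentOK x hx2 hxn hPx⟩⟩
  have hto1 : ∀ x, 1 ≤ x → x ≤ n → Relation.ReflTransGen (adjs n d adj pt) x 1 := by
    intro x
    induction x using Nat.strong_induction_on with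
    | _ x ih =>
      intro hx1 hxn
      by_cases hx : x = 1
      · subst hx; exact Relation.ReflTransGen.refl
      · obtain ⟨y, hy1, hyx, hyn, hya⟩ := hdown x (by omega) hxn
        exact Relation.ReflTransGen.head (hG2.1 hya) (ih y hyx hy1 hyn)
  have hConn2 : ConnOn n (adjs n d adj pt) := by
    intro u v hu1 hun hv1 hvn
    exact (hto1 u hu1 hun).trans
      (by haveI : Std.Symm (adjs n d adj pt) := ⟨fun a b h => hG2.1 h⟩; exact Std.Symm.symm _ _ (hto1 v hv1 hvn))
  -- the new parent function
  set pt2 : ℕ → ℕ :=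
    fun x => if ∃ v ∈ Ss n d adj pt, x = ccs adj pt v then x - 1 else pt x with hpt2def
  have hpt2_0 : ∀ y, pt2 y ≤ y - 1 := by
    intro y
    simp only [hpt2def]
    split
    · exact le_rfl
    · exact h0 y
  have hpt2_pos : ∀ x, (∃ v ∈ Ss n d adj pt, x = ccs adj pt v) → pt2 x = x - 1 := by
    intro x hx
    simp only [hpt2def, if_pos hx]
  have hpt2_neg : ∀ x, ¬(∃ v ∈ Ss n d adj pt, x = ccs adj pt v) → pt2 x = pt x := by
    intro x hx
    simp only [hpt2def, if_neg hx]
  -- old chains are contained in new chains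
  have hchain_mono : ∀ x, chain pt x ⊆ chain pt2 x := by
    intro x
    induction x using Nat.strong_induction_on with
    | _ x ih =>
      intro u hu
      rcases chain_cases hu with rfl | hu'
      · exact chain_self hu.1
      · have hu1 : 1 ≤ u := hu.1
        have hup : u ≤ pt x := chain_le h0 hu'
        have hx2 : 2 ≤ x := by have := h0 x; omega
        by_cases hPx : ∃ v ∈ Ss n d adj pt, x = ccs adj pt v
        · obtain ⟨hS, hxcc, hadj, _, hxn⟩ := hPxElim x hPx
          have htx : tts adj pt (pt x) = x - 1 := by
            simp only [tts]; omega
          have hxm1 : 1 ≤ x - 1 := by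
            have := (htt_facts (pt x) hS).2.1
            omega
          have hxm1n : x - 1 < n := by
            have := (htt_facts (pt x) hS).2.2.2.1
            omega
          have hptmem : pt x ∈ chain pt (x - 1) := by
            have := h2 (x - 1) hxm1 hxm1n
            rwa [show x - 1 + 1 = x by omega] at this
          have humem : u ∈ chain pt (x - 1) := chain_subset hptmem hu'
          have := ih (x - 1) (by omega) humem
          rw [← hpt2_pos x hPx] at this
          exact chain_of_pt this
        · have := ih (pt x) (hptlt x (by omega)) hu'
          rw [← hpt2_neg x hPx] at this
          exact chain_of_pt this
  -- finished vertices have small neighbourhoods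
  have hFfin : ∀ x, 1 ≤ x → x < n → ∀ u, u ≤ x → u ∉ chain pt x →
      ∀ w, adj u w → w ≤ x := by
    intro x
    induction x using Nat.strong_induction_on with
    | _ x ih =>
      intro hx1 hxn u hu hun w haw
      by_cases hx : x = 1
      · subst hx
        have hu0 : u = 0 := by
          rcases Nat.lt_or_ge u 1 with h | h
          · omega
          · exfalso; have hueq : u = 1 := by omega
            exact hun (by rw [hueq]; exact chain_self le_rfl)
        exfalso
        have := (hb u w haw).1
        omega
      · have hx2 : 2 ≤ x := by omega
        have hxm1 : 1 ≤ x - 1 := by omega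
        have hxm1n : x - 1 < n := by omega
        have hux : u ≠ x := fun hc => hun (hc ▸ chain_self (by omega))
        by_cases hmem : u ∈ chain pt (x - 1)
        · have hptx : pt x ∈ chain pt (x - 1) := by
            have := h2 (x - 1) hxm1 hxm1n
            rwa [show x - 1 + 1 = x by omega] at this
          have hgt : pt x < u := by
            rcases Nat.lt_or_ge (pt x) u with h | h
            · exact h
            · exfalso
              apply hun
              have := chain_total h0 hmem hptx h
              exact chain_of_pt this
          have := h3 (x - 1) hxm1 hxm1n u hmem
            (by rwa [show x - 1 + 1 = x by omega]) w haw
          omega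
        · have hu1 : u ≤ x - 1 := by omega
          have := ih (x - 1) (by omega) hxm1 hxm1n u hu1 hmem w haw
          omega
  -- validity of the new graph
  have hValid2 : ValidDFS n (adjs n d adj pt) := by
    apply validDFS_of n (adjs n d adj pt) hG2 pt2 hpt2_0
    · -- h1'
      intro x hx2 hxn
      by_cases hPx : ∃ v ∈ Ss n d adj pt, x = ccs adj pt v
      · rw [hpt2_pos x hPx]
        obtain ⟨hS, hxcc, hadj, _, _⟩ := hPxElim x hPx
        have htx : tts adj pt (pt x) = x - 1 := by simp only [tts]; omega
        have ht1 : 1 ≤ tts adj pt (pt x) := (htt_facts (pt x) hS).2.1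
        refine ⟨by omega, ?_⟩
        rw [← htx]
        exact Or.inr ⟨pt x, hS, Or.inl ⟨rfl, hxcc⟩⟩
      · rw [hpt2_neg x hPx]
        exact ⟨(h1 x hx2 hxn).1, Or.inl ⟨(h1 x hx2 hxn).2, hParentOK x hx2 hxn hPx⟩⟩
    · -- h2'
      intro x hx1 hxn
      by_cases hPx : ∃ v ∈ Ss n d adj pt, x + 1 = ccs adj pt v
      · rw [hpt2_pos (x + 1) hPx]
        simpa using chain_self (pt := pt2) hx1
      · rw [hpt2_neg (x + 1) hPx]
        exact hchain_mono x (h2 x hx1 hxn)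
    · -- h3'
      intro x hx1 hxn u hu hgt w haw
      have hux : u ≤ x := chain_le hpt2_0 hu
      by_cases hPx : ∃ v ∈ Ss n d adj pt, x + 1 = ccs adj pt v
      · rw [hpt2_pos (x + 1) hPx] at hgt
        omega
      · rw [hpt2_neg (x + 1) hPx] at hgt
        rcases haw with ⟨haw, _⟩ | haw
        · by_cases hmem : u ∈ chain pt x
          · exact h3 x hx1 hxn u hmem hgt w haw
          · exact hFfin x hx1 hxn u hux hmem w haw
        · rcases hAd_struct w u (hAdsym u w haw) with ⟨⟨v, hv, hucc⟩, hw⟩ | ⟨⟨v, hv, hutt⟩, hw⟩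
          -- here `haw : Adds w u`... careful with orientation
          · -- u = ccs v, w = tts (pt u) = u - 1
            subst hw
            obtain ⟨_, _, _, _, hcc2⟩ := htt_facts (pt u) (hPxElim u ⟨v, hv, hucc⟩).1
            have : tts adj pt (pt u) = u - 1 := by
              simp only [tts]
              have := (hPxElim u ⟨v, hv, hucc⟩).2.1
              omega
            rw [this]
            omega
          · -- u = tts v, w = u + 1
            subst hw
            -- if u + 1 ≤ x done; else u = x and x + 1 = ccs v, contradiction
            rcases Nat.lt_or_ge u x with h | h
            · omega
            · exfalso
              have hux' : u = x := by omega
              apply hPx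
              refine ⟨v, hv, ?_⟩
              have := (htt_facts v hv).2.2.2.2
              simp only [tts] at hutt
              omega
  -- degree bound machinery
  have master : ∀ x (Rs As : Set ℕ), Rs ⊆ {u | adj u x} →
      (∀ u ∈ Rs, Rems n d adj pt u x) → (∀ u, Adds n d adj pt u x → u ∈ As) →
      As.Finite →
      degree (adjs n d adj pt) x ≤ degree adj x - Rs.ncard + As.ncard := by
    intro x Rs As hRs hRem hAs hAsfin
    apply ncard_bound (hNfin x) hAsfin hRs
    intro u hu
    rcases hu with ⟨hadj, hnRem⟩ | hAd
    · exact Or.inl ⟨hadj, fun hc => hnRem (hRem u hc)⟩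
    · exact Or.inr (hAs u hAd)
  -- common degree-case facts
  have hsingle_sub : ∀ x a, adj a x → ({a} : Set ℕ) ⊆ {u | adj u x} := by
    intro x a ha u hu
    rw [Set.mem_singleton_iff] at hu
    subst hu
    exact ha
  have hdiffcard : ∀ (s : Set ℕ), s.Finite → ∀ a : ℕ, s.ncard ≤ (s \ {a}).ncard + 1 := by
    intro s hs a
    have hcover : s ⊆ (s \ {a}) ∪ {a} := by
      intro u hu
      by_cases h : u = a
      · right; simp [h]
      · left; exact ⟨hu, by simp [h]⟩
    calc s.ncard ≤ ((s \ {a}) ∪ {a}).ncard :=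
          Set.ncard_le_ncard hcover (hs.diff.union (Set.finite_singleton _))
      _ ≤ (s \ {a}).ncard + ({a} : Set ℕ).ncard := Set.ncard_union_le _ _
      _ = (s \ {a}).ncard + 1 := by rw [Set.ncard_singleton]
  -- the degree bound
  have hdeg2 : ∀ x, degree (adjs n d adj pt) x ≤ d - 1 := by
    intro x
    by_cases hxrange : 1 ≤ x ∧ x ≤ n
    swap
    · have hempty : {u | adjs n d adj pt u x} = ∅ := by
        ext u
        simp only [Set.mem_setOf_eq, Set.mem_empty_iff_false, iff_false]
        intro h
        rcases h with ⟨ha, _⟩ | ha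
        · have := hb u x ha
          exact hxrange ⟨this.2.2.1, this.2.2.2.1⟩
        · have := hAdbounds u x ha
          exact hxrange ⟨this.2.2.1, this.2.2.2.1⟩
      show ({u | adjs n d adj pt u x}).ncard ≤ d - 1
      rw [hempty]
      simp
    obtain ⟨hx1, hxn⟩ := hxrange
    have hPdata : (∃ v ∈ Ss n d adj pt, x = ccs adj pt v) →
        adj (pt x) x ∧ Rems n d adj pt (pt x) x ∧ pt x < x := by
      intro hPx
      obtain ⟨hS, hxcc, hadj, hx2, _⟩ := hPxElim x hPx
      exact ⟨hadj, Or.inl ⟨hS, hxcc⟩, hptlt x (by omega)⟩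
    have hQlt : (∃ v ∈ Ss n d adj pt, x = tts adj pt v) → ∀ w, adj x w → w < x := by
      rintro ⟨v, hv, hxeq⟩ w hw
      rw [hxeq] at hw ⊢
      exact hTfin v hv w hw
    have hAddmem : ∀ u, Adds n d adj pt u x →
        ((∃ v ∈ Ss n d adj pt, x = ccs adj pt v) ∧ u = tts adj pt (pt x)) ∨
        ((∃ v ∈ Ss n d adj pt, x = tts adj pt v) ∧ u = x + 1) := fun u => hAd_struct u x
    by_cases hxS : x ∈ Ss n d adj pt
    · -- surgery vertex
      have hdx : degree adj x = d := hxS.1.2.2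
      have hnQ : ¬ (∃ v ∈ Ss n d adj pt, x = tts adj pt v) := by
        intro hQ
        have hadjc : adj x (c1s adj pt x) := (hc1mem x hxS).1
        have := hQlt hQ (c1s adj pt x) hadjc
        have := (hSfacts x hxS).2.2.1
        omega
      have hccadj : adj (ccs adj pt x) x := hsym (hSfacts x hxS).2.1
      have hccRem : Rems n d adj pt (ccs adj pt x) x := Or.inr (Or.inl ⟨hxS, rfl⟩)
      have hxltcc : x < ccs adj pt x := by
        have := (hSfacts x hxS).2.2.1
        have := (hSfacts x hxS).2.2.2.1
        omega
      by_cases hPx : ∃ v ∈ Ss n d adj pt, x = ccs adj pt v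
      · obtain ⟨hpa, hpR, hplt⟩ := hPdata hPx
        have hm := master x {ccs adj pt x, pt x} {tts adj pt (pt x)} ?_ ?_ ?_ ?_
        · have hr : ({ccs adj pt x, pt x} : Set ℕ).ncard = 2 :=
            Set.ncard_pair (by omega)
          have ha : ({tts adj pt (pt x)} : Set ℕ).ncard = 1 := Set.ncard_singleton _
          omega
        · intro u hu
          rcases hu with rfl | hu
          · exact hccadj
          · rw [Set.mem_singleton_iff] at hu; subst hu; exact hpa
        · intro u hu
          rcases hu with rfl | hu
          · exact hccRem
          · rw [Set.mem_singleton_iff] at hu; subst hu; exact hpR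
        · intro u hAd
          rcases hAddmem u hAd with ⟨_, hu⟩ | ⟨hq, _⟩
          · simp [hu]
          · exact absurd hq hnQ
        · exact Set.finite_singleton _
      · have hm := master x {ccs adj pt x} ∅ ?_ ?_ ?_ ?_
        · have hr : ({ccs adj pt x} : Set ℕ).ncard = 1 := Set.ncard_singleton _
          have ha : (∅ : Set ℕ).ncard = 0 := Set.ncard_empty _
          omega
        · exact hsingle_sub x _ hccadj
        · intro u hu
          rw [Set.mem_singleton_iff] at hu; subst hu; exact hccRem
        · intro u hAd
          rcases hAddmem u hAd with ⟨hp, _⟩ | ⟨hq, _⟩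
          · exact absurd hp hPx
          · exact absurd hq hnQ
        · exact Set.finite_empty
    · by_cases hxV : x ∈ Vds n d adj
      · -- degree-d vertex with a non-tree edge
        have hdx : degree adj x = d := hxV.2.2
        have hNTne : (NTs adj pt x).Nonempty := by
          rcases Set.eq_empty_or_nonempty (NTs adj pt x) with h | h
          · exact absurd ⟨hxV, h⟩ hxS
          · exact h
        have he1 := he1mem x hNTne
        have he1adj : adj (e1s adj pt x) x := he1.1
        have he1R : Rems n d adj pt (e1s adj pt x) x :=
          Or.inr (Or.inr (Or.inl ⟨hxV, hNTne, Or.inl rfl⟩))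
        by_cases hQx : ∃ v ∈ Ss n d adj pt, x = tts adj pt v
        · -- need a second removal
          have hsub2 : {u | adj u x} \ {pt x} ⊆ NTs adj pt x := by
            rintro u ⟨hu, hne⟩
            refine ⟨hu, by simpa using hne, ?_⟩
            have hulx : u < x := hQlt hQx u (hsym hu)
            intro hc
            have := h0 u
            omega
          have hNTcard : 2 ≤ (NTs adj pt x).ncard := by
            have hle := hdiffcard {u | adj u x} (hNfin x) (pt x)
            have hmono : ({u | adj u x} \ {pt x}).ncard ≤ (NTs adj pt x).ncard :=
              Set.ncard_le_ncard hsub2 (hNTfin x)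
            have : degree adj x = ({u | adj u x}).ncard := rfl
            omega
          have hne2 : (NTs adj pt x \ {e1s adj pt x}).Nonempty := by
            rcases Set.eq_empty_or_nonempty (NTs adj pt x \ {e1s adj pt x}) with h | h
            · exfalso
              have hsub3 : NTs adj pt x ⊆ {e1s adj pt x} := Set.diff_eq_empty.1 h
              have := Set.ncard_le_ncard hsub3 (Set.finite_singleton _)
              rw [Set.ncard_singleton] at this
              omega
            · exact h
          have he2 := he2mem x hne2
          have he2adj : adj (e2s adj pt x) x := he2.1.1
          have he2R : Rems n d adj pt (e2s adj pt x) x :=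
            Or.inr (Or.inr (Or.inl ⟨hxV, hNTne, Or.inr rfl⟩))
          by_cases hPx : ∃ v ∈ Ss n d adj pt, x = ccs adj pt v
          · obtain ⟨hpa, hpR, hplt⟩ := hPdata hPx
            have hm := master x {e1s adj pt x, e2s adj pt x, pt x}
              {tts adj pt (pt x), x + 1} ?_ ?_ ?_ ?_
            · have hr : ({e1s adj pt x, e2s adj pt x, pt x} : Set ℕ).ncard = 3 := by
                rw [Set.ncard_insert_of_notMem (by
                    simp only [Set.mem_insert_iff, Set.mem_singleton_iff]
                    push_neg
                    exact ⟨fun hc => he2.2 hc.symm, fun hc => he1.2.1 hc⟩)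
                  ((Set.finite_singleton _).insert _),
                  Set.ncard_pair (fun hc => he2.1.2.1 hc)]
              have ha : ({tts adj pt (pt x), x + 1} : Set ℕ).ncard ≤ 2 :=
                le_trans (Set.ncard_insert_le _ _) (by rw [Set.ncard_singleton])
              omega
            · intro u hu
              rcases hu with rfl | hu
              · exact he1adj
              rcases hu with rfl | hu
              · exact he2adj
              · rw [Set.mem_singleton_iff] at hu; subst hu; exact hpa
            · intro u hu
              rcases hu with rfl | hu
              · exact he1R
              rcases hu with rfl | hu
              · exact he2R
              · rw [Set.mem_singleton_iff] at hu; subst hu; exact hpR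
            · intro u hAd
              rcases hAddmem u hAd with ⟨_, hu⟩ | ⟨_, hu⟩
              · simp [hu]
              · simp [hu]
            · exact (Set.finite_singleton _).insert _
          · have hm := master x {e1s adj pt x, e2s adj pt x} {x + 1} ?_ ?_ ?_ ?_
            · have hr : ({e1s adj pt x, e2s adj pt x} : Set ℕ).ncard = 2 :=
                Set.ncard_pair (fun hc => he2.2 hc.symm)
              have ha : ({x + 1} : Set ℕ).ncard = 1 := Set.ncard_singleton _
              omega
            · intro u hu
              rcases hu with rfl | hu
              · exact he1adj
              · rw [Set.mem_singleton_iff] at hu; subst hu; exact he2adj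
            · intro u hu
              rcases hu with rfl | hu
              · exact he1R
              · rw [Set.mem_singleton_iff] at hu; subst hu; exact he2R
            · intro u hAd
              rcases hAddmem u hAd with ⟨hp, _⟩ | ⟨_, hu⟩
              · exact absurd hp hPx
              · simp [hu]
            · exact Set.finite_singleton _
        · by_cases hPx : ∃ v ∈ Ss n d adj pt, x = ccs adj pt v
          · obtain ⟨hpa, hpR, hplt⟩ := hPdata hPx
            have hm := master x {e1s adj pt x, pt x} {tts adj pt (pt x)} ?_ ?_ ?_ ?_
            · have hr : ({e1s adj pt x, pt x} : Set ℕ).ncard = 2 :=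
                Set.ncard_pair (fun hc => he1.2.1 hc)
              have ha : ({tts adj pt (pt x)} : Set ℕ).ncard = 1 := Set.ncard_singleton _
              omega
            · intro u hu
              rcases hu with rfl | hu
              · exact he1adj
              · rw [Set.mem_singleton_iff] at hu; subst hu; exact hpa
            · intro u hu
              rcases hu with rfl | hu
              · exact he1R
              · rw [Set.mem_singleton_iff] at hu; subst hu; exact hpR
            · intro u hAd
              rcases hAddmem u hAd with ⟨_, hu⟩ | ⟨hq, _⟩
              · simp [hu]
              · exact absurd hq hQx
            · exact Set.finite_singleton _
          · have hm := master x {e1s adj pt x} ∅ ?_ ?_ ?_ ?_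
            · have hr : ({e1s adj pt x} : Set ℕ).ncard = 1 := Set.ncard_singleton _
              have ha : (∅ : Set ℕ).ncard = 0 := Set.ncard_empty _
              omega
            · exact hsingle_sub x _ he1adj
            · intro u hu
              rw [Set.mem_singleton_iff] at hu; subst hu; exact he1R
            · intro u hAd
              rcases hAddmem u hAd with ⟨hp, _⟩ | ⟨hq, _⟩
              · exact absurd hp hPx
              · exact absurd hq hQx
            · exact Set.finite_empty
      · -- low-degree vertex
        have hdlt : degree adj x ≤ d - 1 := by
          have h := hdeg x
          have : degree adj x ≠ d := fun hc => hxV ⟨hx1, hxn, hc⟩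
          omega
        by_cases hQx : ∃ v ∈ Ss n d adj pt, x = tts adj pt v
        · by_cases hNTne : (NTs adj pt x).Nonempty
          · have he1 := he1mem x hNTne
            have he1adj : adj (e1s adj pt x) x := he1.1
            have he1R : Rems n d adj pt (e1s adj pt x) x :=
              Or.inr (Or.inr (Or.inr (Or.inr (Or.inl ⟨hQx, hNTne, rfl⟩))))
            by_cases hPx : ∃ v ∈ Ss n d adj pt, x = ccs adj pt v
            · obtain ⟨hpa, hpR, hplt⟩ := hPdata hPx
              have hsub : ({e1s adj pt x, pt x} : Set ℕ) ⊆ {u | adj u x} := by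
                intro u hu
                rcases hu with rfl | hu
                · exact he1adj
                · rw [Set.mem_singleton_iff] at hu; subst hu; exact hpa
              have hm := master x {e1s adj pt x, pt x} {tts adj pt (pt x), x + 1}
                hsub ?_ ?_ ?_
              · have hr : ({e1s adj pt x, pt x} : Set ℕ).ncard = 2 :=
                  Set.ncard_pair (fun hc => he1.2.1 hc)
                have ha : ({tts adj pt (pt x), x + 1} : Set ℕ).ncard ≤ 2 :=
                  le_trans (Set.ncard_insert_le _ _) (by rw [Set.ncard_singleton])
                have hrle := Set.ncard_le_ncard hsub (hNfin x)
                have : degree adj x = ({u | adj u x}).ncard := rfl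
                omega
              · intro u hu
                rcases hu with rfl | hu
                · exact he1R
                · rw [Set.mem_singleton_iff] at hu; subst hu; exact hpR
              · intro u hAd
                rcases hAddmem u hAd with ⟨_, hu⟩ | ⟨_, hu⟩
                · simp [hu]
                · simp [hu]
              · exact (Set.finite_singleton _).insert _
            · have hsub : ({e1s adj pt x} : Set ℕ) ⊆ {u | adj u x} :=
                hsingle_sub x _ he1adj
              have hm := master x {e1s adj pt x} {x + 1} hsub ?_ ?_ ?_
              · have hr : ({e1s adj pt x} : Set ℕ).ncard = 1 := Set.ncard_singleton _
                have ha : ({x + 1} : Set ℕ).ncard = 1 := Set.ncard_singleton _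
                have hrle := Set.ncard_le_ncard hsub (hNfin x)
                have : degree adj x = ({u | adj u x}).ncard := rfl
                omega
              · intro u hu
                rw [Set.mem_singleton_iff] at hu; subst hu; exact he1R
              · intro u hAd
                rcases hAddmem u hAd with ⟨hp, _⟩ | ⟨_, hu⟩
                · exact absurd hp hPx
                · simp [hu]
              · exact Set.finite_singleton _
          · -- no non-tree neighbours: tiny degree
            have hNsub : {u | adj u x} ⊆ {pt x} := by
              intro u hu
              have hulx : u < x := hQlt hQx u (hsym hu)
              by_contra hne
              apply hNTne
              refine ⟨u, hu, by simpa using hne, ?_⟩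
              intro hc
              have := h0 u
              omega
            have hdeg1 : degree adj x ≤ 1 := by
              have := Set.ncard_le_ncard hNsub (Set.finite_singleton _)
              rw [Set.ncard_singleton] at this
              exact this
            by_cases hPx : ∃ v ∈ Ss n d adj pt, x = ccs adj pt v
            · obtain ⟨hpa, hpR, hplt⟩ := hPdata hPx
              have hm := master x {pt x} {tts adj pt (pt x), x + 1}
                (hsingle_sub x _ hpa) ?_ ?_ ?_
              · have hr : ({pt x} : Set ℕ).ncard = 1 := Set.ncard_singleton _
                have ha : ({tts adj pt (pt x), x + 1} : Set ℕ).ncard ≤ 2 :=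
                  le_trans (Set.ncard_insert_le _ _) (by rw [Set.ncard_singleton])
                omega
              · intro u hu
                rw [Set.mem_singleton_iff] at hu; subst hu; exact hpR
              · intro u hAd
                rcases hAddmem u hAd with ⟨_, hu⟩ | ⟨_, hu⟩
                · simp [hu]
                · simp [hu]
              · exact (Set.finite_singleton _).insert _
            · have hm := master x ∅ {x + 1} (Set.empty_subset _) ?_ ?_ ?_
              · have ha : ({x + 1} : Set ℕ).ncard = 1 := Set.ncard_singleton _
                have h0' : (∅ : Set ℕ).ncard = 0 := Set.ncard_empty _
                omega
              · intro u hu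
                exact absurd hu (Set.notMem_empty u)
              · intro u hAd
                rcases hAddmem u hAd with ⟨hp, _⟩ | ⟨_, hu⟩
                · exact absurd hp hPx
                · simp [hu]
              · exact Set.finite_singleton _
        · by_cases hPx : ∃ v ∈ Ss n d adj pt, x = ccs adj pt v
          · obtain ⟨hpa, hpR, hplt⟩ := hPdata hPx
            have hsub : ({pt x} : Set ℕ) ⊆ {u | adj u x} := hsingle_sub x _ hpa
            have hm := master x {pt x} {tts adj pt (pt x)} hsub ?_ ?_ ?_
            · have hr : ({pt x} : Set ℕ).ncard = 1 := Set.ncard_singleton _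
              have ha : ({tts adj pt (pt x)} : Set ℕ).ncard = 1 := Set.ncard_singleton _
              have hrle := Set.ncard_le_ncard hsub (hNfin x)
              have : degree adj x = ({u | adj u x}).ncard := rfl
              omega
            · intro u hu
              rw [Set.mem_singleton_iff] at hu; subst hu; exact hpR
            · intro u hAd
              rcases hAddmem u hAd with ⟨_, hu⟩ | ⟨hq, _⟩
              · simp [hu]
              · exact absurd hq hQx
            · exact Set.finite_singleton _
          · have hm := master x ∅ ∅ (Set.empty_subset _) ?_ ?_ ?_
            · have h0' : (∅ : Set ℕ).ncard = 0 := Set.ncard_empty _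
              omega
            · intro u hu
              exact absurd hu (Set.notMem_empty u)
            · intro u hAd
              rcases hAddmem u hAd with ⟨hp, _⟩ | ⟨hq, _⟩
              · exact absurd hp hPx
              · exact absurd hq hQx
            · exact Set.finite_empty
  -- the edge difference bound
  have hVdfin : ({v : ℕ | 1 ≤ v ∧ v ≤ n ∧ degree adj v = d}).Finite :=
    (Set.finite_Icc 1 n).subset (fun v hv => Set.mem_Icc.2 ⟨hv.1, hv.2.1⟩)
  set B : ℕ → Set (ℕ × ℕ) := fun v =>
    if v ∈ Ss n d adj pt then
      {(v, ccs adj pt v), (tts adj pt v, ccs adj pt v),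
        (min (e1s adj pt (tts adj pt v)) (tts adj pt v),
          max (e1s adj pt (tts adj pt v)) (tts adj pt v))}
    else
      {(min (e1s adj pt v) v, max (e1s adj pt v) v),
        (min (e2s adj pt v) v, max (e2s adj pt v) v)} with hBdef
  have hBfin : ∀ v, (B v).Finite := by
    intro v
    simp only [hBdef]
    split
    · exact ((Set.finite_singleton _).insert _).insert _
    · exact (Set.finite_singleton _).insert _
  have hBcard : ∀ v, (B v).ncard ≤ 3 := by
    intro v
    simp only [hBdef]
    split
    · calc _ ≤ _ + 1 := Set.ncard_insert_le _ _
        _ ≤ (_ + 1) + 1 := by gcongr; exact Set.ncard_insert_le _ _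
        _ ≤ 3 := by
            have : (({(min (e1s adj pt (tts adj pt v)) (tts adj pt v),
              max (e1s adj pt (tts adj pt v)) (tts adj pt v))} : Set (ℕ × ℕ))).ncard = 1 :=
              Set.ncard_singleton _
            omega
    · calc _ ≤ _ + 1 := Set.ncard_insert_le _ _
        _ ≤ 3 := by
            have : (({(min (e2s adj pt v) v, max (e2s adj pt v) v)} : Set (ℕ × ℕ))).ncard = 1 :=
              Set.ncard_singleton _
            omega
  have hSnotB : ∀ w, (NTs adj pt w).Nonempty → w ∉ Ss n d adj pt := by
    intro w hne hc
    rw [hc.2] at hne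
    exact Set.not_nonempty_empty hne
  have hcover : {p : ℕ × ℕ | p.1 < p.2 ∧ ¬(adj p.1 p.2 ↔ adjs n d adj pt p.1 p.2)} ⊆
      ⋃ v ∈ {v : ℕ | 1 ≤ v ∧ v ≤ n ∧ degree adj v = d}, B v := by
    rintro ⟨a, b⟩ ⟨hab, hdiff⟩
    simp only [Set.mem_setOf_eq] at hab hdiff
    by_cases hadj : adj a b
    · have hnadj2 : ¬ adjs n d adj pt a b := fun h => hdiff ⟨fun _ => h, fun _ => hadj⟩
      have hRem : Rems n d adj pt a b := by
        by_contra hR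
        exact hnadj2 (Or.inl ⟨hadj, hR⟩)
      rcases hRem with h | h | h | h | h | h
      · exact Set.mem_biUnion h.1.1 (by
          simp only [hBdef, if_pos h.1]
          exact Or.inl (by rw [h.2]))
      · exfalso
        have := (hSfacts b h.1).2.2.1
        have := (hSfacts b h.1).2.2.2.1
        have := h.2
        omega
      · obtain ⟨hbV, hne, heq⟩ := h
        refine Set.mem_biUnion hbV ?_
        simp only [hBdef, if_neg (hSnotB b hne)]
        rcases heq with heq | heq
        · left
          rw [← heq, min_eq_left hab.le, max_eq_right hab.le]
        · right
          rw [Set.mem_singleton_iff, ← heq, min_eq_left hab.le, max_eq_right hab.le]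
      · obtain ⟨haV, hne, heq⟩ := h
        refine Set.mem_biUnion haV ?_
        simp only [hBdef, if_neg (hSnotB a hne)]
        rcases heq with heq | heq
        · left
          rw [← heq, min_eq_right hab.le, max_eq_left hab.le]
        · right
          rw [Set.mem_singleton_iff, ← heq, min_eq_right hab.le, max_eq_left hab.le]
      · obtain ⟨⟨v, hv, hbtt⟩, hne, heq⟩ := h
        refine Set.mem_biUnion hv.1 ?_
        simp only [hBdef, if_pos hv]
        right; right
        rw [Set.mem_singleton_iff, ← hbtt, ← heq, min_eq_left hab.le, max_eq_right hab.le]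
      · obtain ⟨⟨v, hv, hatt⟩, hne, heq⟩ := h
        refine Set.mem_biUnion hv.1 ?_
        simp only [hBdef, if_pos hv]
        right; right
        rw [Set.mem_singleton_iff, ← hatt, ← heq, min_eq_right hab.le, max_eq_left hab.le]
    · have hadj2 : adjs n d adj pt a b := by
        by_contra h
        exact hdiff ⟨fun ha => absurd ha hadj, fun h2 => absurd h2 h⟩
      have hAdd : Adds n d adj pt a b := by
        rcases hadj2 with ⟨ha, _⟩ | ha
        · exact absurd ha hadj
        · exact ha
      obtain ⟨v, hv, hcase⟩ := hAdd
      rcases hcase with ⟨ha, hb'⟩ | ⟨ha, hb'⟩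
      · refine Set.mem_biUnion hv.1 ?_
        simp only [hBdef, if_pos hv]
        right; left
        rw [ha, hb']
      · exfalso
        have := (htt_facts v hv).2.2.2.2
        simp only [tts] at ha
        omega
  have hUnion := union3 _ hVdfin B hBfin hBcard
  have hcount : edgeDiff adj (adjs n d adj pt) ≤
      3 * Set.ncard {v : ℕ | 1 ≤ v ∧ v ≤ n ∧ degree adj v = d} := by
    have hle : edgeDiff adj (adjs n d adj pt) ≤
        (⋃ v ∈ {v : ℕ | 1 ≤ v ∧ v ≤ n ∧ degree adj v = d}, B v).ncard :=
      Set.ncard_le_ncard hcover hUnion.1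
    exact le_trans hle hUnion.2
  exact ⟨hG2, hConn2, hdeg2, hValid2, hcount⟩


/-- **degree reduction.** If `G` is connected on `{1,…,n}` with maximum degree
at most `d ≥ 3` and its identity labelling is a valid DFS numbering, then there is a connected
graph `G'` on the same vertex set, of maximum degree at most `d - 1`, whose identity labelling
is a valid DFS numbering and with `|E △ E'| ≤ 3·|V_d|`, where `V_d` is the set of vertices of
degree exactly `d` in `G`. -/
theorem degree_reduction (n d : ℕ) (adj : ℕ → ℕ → Prop) (hG : IsGraphOn n adj)
    (hconn : ConnOn n adj) (hd : 3 ≤ d) (hdeg : ∀ v, degree adj v ≤ d)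
    (hvalid : ValidDFS n adj) :
    ∃ adj' : ℕ → ℕ → Prop, IsGraphOn n adj' ∧ ConnOn n adj' ∧
      (∀ v, degree adj' v ≤ d - 1) ∧ ValidDFS n adj' ∧
      edgeDiff adj adj' ≤ 3 * Set.ncard {v | 1 ≤ v ∧ v ≤ n ∧ degree adj v = d} := by
  obtain ⟨order, hrun, horder⟩ := hvalid
  rw [List.map_id] at horder
  obtain ⟨pt, h0, h1, h2, h3⟩ := exists_pt n adj hG hconn order hrun horder
  obtain ⟨hA, hB, hC, hD, hE⟩ := reduce n d adj pt hG hd hdeg h0 h1 h2 h3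
  exact ⟨adjs n d adj pt, hA, hB, hC, hD, hE⟩
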